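/- (Casimir operator on horocyclic-invariant functions.) Let u : M₂(ℝ) → ℂ be a smooth function such that (U₋u)(g) = 0 for all g ∈ SL(2,ℝ). Then for every g ∈ SL(2,ℝ): (X(Xu))(g) + (X⊥(X⊥u))(g) − (V(Vu))(g) = (X(Xu))(g) − (Xu)(g). That is, the Casimir operator Ω = X² + X⊥² − V² acts as X² − X on the kernel of U₋. -/

import Mathlib

open Complex

attribute [local instance] Matrix.normedAddCommGroup Matrix.normedSpace

/-- The space of real 2×2 matrices. -/
abbrev M2 := Matrix (Fin 2) (Fin 2) ℝ

noncomputable def matX : M2 := !![1/2, 0; 0, -(1/2)]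
noncomputable def matXperp : M2 := !![0, 1/2; 1/2, 0]
noncomputable def matV : M2 := !![0, 1/2; -(1/2), 0]
noncomputable def matUminus : M2 := !![0, 0; 1, 0]

/-- The left-invariant derivative `(Yu)(g) = d/dt|₀ u(g·exp(tY))`. -/
noncomputable def lieD (Y : M2) (u : M2 → ℂ) (g : M2) : ℂ :=
  deriv (fun t : ℝ => u (g * NormedSpace.exp (t • Y))) 0

/-- The raising operator `η₊u = (1/2)(Xu + i·X⊥u)`. -/
noncomputable def etaPlus (u : M2 → ℂ) (g : M2) : ℂ :=
  (1 / 2 : ℂ) * (lieD matX u g + Complex.I * lieD matXperp u g)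

/-- The lowering operator `η₋u = (1/2)(Xu − i·X⊥u)`. -/
noncomputable def etaMinus (u : M2 → ℂ) (g : M2) : ℂ :=
  (1 / 2 : ℂ) * (lieD matX u g - Complex.I * lieD matXperp u g)

/-- The `k`-th Fourier mode `u_k(g) = (1/2π)∫₀^{2π} u(g·exp(θV)) e^{−ikθ} dθ`. -/
noncomputable def fMode (u : M2 → ℂ) (k : ℤ) (g : M2) : ℂ :=
  (((2 * Real.pi)⁻¹ : ℝ) : ℂ) *
    ∫ θ in (0 : ℝ)..(2 * Real.pi),
      u (g * NormedSpace.exp (θ • matV)) * Complex.exp (-(k : ℂ) * (θ : ℂ) * Complex.I)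

lemma entry_hasDerivAt (Y : M2) (t : ℝ) (i j : Fin 2) :
    HasDerivAt (fun s : ℝ => NormedSpace.exp (s • Y) i j)
      ((NormedSpace.exp (t • Y) * Y) i j) t := by
  letI : SeminormedRing M2 := Matrix.linftyOpSemiNormedRing
  letI : NormedRing M2 := Matrix.linftyOpNormedRing
  letI : NormedAlgebra ℝ M2 := Matrix.linftyOpNormedAlgebra
  letI : NormedAddCommGroup M2 := NonUnitalNormedRing.toNormedAddCommGroup
  letI : NormedSpace ℝ M2 := NormedAlgebra.toNormedSpace M2
  haveI : CompleteSpace M2 := FiniteDimensional.complete ℝ M2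
  let e : M2 →ₗ[ℝ] ℝ :=
    { toFun := fun A => A i j, map_add' := fun _ _ => rfl, map_smul' := fun _ _ => rfl }
  have h := hasDerivAt_exp_smul_const (𝕂 := ℝ) Y t
  exact e.toContinuousLinearMap.hasFDerivAt.comp_hasDerivAt t h

lemma curve_entry_hasDerivAt (g Y : M2) (t : ℝ) (i j : Fin 2) :
    HasDerivAt (fun s : ℝ => (g * NormedSpace.exp (s • Y)) i j)
      ((g * NormedSpace.exp (t • Y) * Y) i j) t := by
  have h : HasDerivAt (fun s : ℝ => ∑ k, g i k * NormedSpace.exp (s • Y) k j)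
      (∑ k, g i k * ((NormedSpace.exp (t • Y) * Y) k j)) t :=
    HasDerivAt.fun_sum fun k _ => (entry_hasDerivAt Y t k j).const_mul (g i k)
  convert h using 1
  · exact funext fun s => Matrix.mul_apply
  rw [mul_assoc, Matrix.mul_apply]

lemma curve_hasDerivAt (g Y : M2) (t : ℝ) :
    HasDerivAt (fun s : ℝ => g * NormedSpace.exp (s • Y))
      (g * NormedSpace.exp (t • Y) * Y) t :=
  hasDerivAt_pi.2 fun i => hasDerivAt_pi.2 fun j => curve_entry_hasDerivAt g Y t i j

lemma lieD_eq (u : M2 → ℂ) (hu : Differentiable ℝ u) (Y g : M2) :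
    lieD Y u g = fderiv ℝ u g (g * Y) := by
  have h0 : g * NormedSpace.exp ((0:ℝ) • Y) = g := by
    simp [NormedSpace.exp_zero]
  have hc : HasDerivAt (fun s : ℝ => g * NormedSpace.exp (s • Y)) (g * Y) 0 := by
    have h := curve_hasDerivAt g Y 0
    rwa [h0] at h
  have h := (hu (g * NormedSpace.exp ((0:ℝ) • Y))).hasFDerivAt.comp_hasDerivAt 0 hc
  rw [h0] at h
  exact h.deriv

noncomputable def mulRightCLM (Z : M2) : M2 →L[ℝ] M2 :=
  LinearMap.toContinuousLinearMap
    { toFun := fun A => A * Z,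
      map_add' := fun a b => add_mul a b Z,
      map_smul' := fun c a => smul_mul_assoc c a Z }

lemma lieD_fun (u : M2 → ℂ) (hu : ContDiff ℝ (⊤ : ℕ∞) u) (Z : M2) :
    lieD Z u = fun g => fderiv ℝ u g (g * Z) :=
  funext fun g => lieD_eq u (hu.differentiable (by simp)) Z g

lemma lieD_contDiff (u : M2 → ℂ) (hu : ContDiff ℝ (⊤ : ℕ∞) u) (Z : M2) :
    ContDiff ℝ (⊤ : ℕ∞) (lieD Z u) := by
  rw [lieD_fun u hu Z]
  exact (hu.fderiv_right (le_of_eq ENat.coe_top_add_one)).clm_apply ((mulRightCLM Z).contDiff)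

lemma lieD_lieD (u : M2 → ℂ) (hu : ContDiff ℝ (⊤ : ℕ∞) u) (Y Z g : M2) :
    lieD Y (lieD Z u) g
      = fderiv ℝ (fderiv ℝ u) g (g * Y) (g * Z) + fderiv ℝ u g (g * (Y * Z)) := by
  rw [lieD_eq _ ((lieD_contDiff u hu Z).differentiable (by simp)) Y g, lieD_fun u hu Z]
  have h1 : HasFDerivAt (fderiv ℝ u) (fderiv ℝ (fderiv ℝ u) g) g :=
    (((hu.fderiv_right (le_of_eq ENat.coe_top_add_one)).differentiable (by simp)) g).hasFDerivAt
  have h2 : HasFDerivAt (fun x : M2 => x * Z) (mulRightCLM Z) g := (mulRightCLM Z).hasFDerivAt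
  have h3 := h1.clm_apply h2
  rw [show fderiv ℝ (fun g => fderiv ℝ u g (g * Z)) g = _ from h3.fderiv]
  change fderiv ℝ u g (g * Y * Z) + fderiv ℝ (fderiv ℝ u) g (g * Y) (g * Z) = _
  simp [ContinuousLinearMap.add_apply, mulRightCLM, mul_assoc,
    LinearMap.toContinuousLinearMap]
  ring

lemma det_mul_exp (g Y : M2) (hY : Y.trace = 0) (t : ℝ) :
    (g * NormedSpace.exp (t • Y)).det = g.det := by
  have key : ∀ s : ℝ, HasDerivAt (fun r : ℝ => (g * NormedSpace.exp (r • Y)).det) 0 s := by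
    intro s
    set M := g * NormedSpace.exp (s • Y) with hM
    have hd : ∀ i j, HasDerivAt (fun r : ℝ => (g * NormedSpace.exp (r • Y)) i j)
        ((M * Y) i j) s := fun i j => curve_entry_hasDerivAt g Y s i j
    have h : HasDerivAt (fun r : ℝ => (g * NormedSpace.exp (r • Y)).det)
        ((M * Y) 0 0 * M 1 1 + M 0 0 * (M * Y) 1 1
          - ((M * Y) 0 1 * M 1 0 + M 0 1 * (M * Y) 1 0)) s := by
      have := (((hd 0 0).mul (hd 1 1)).sub ((hd 0 1).mul (hd 1 0)))
      convert this using 1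
      · rfl
      · rfl
      funext r
      exact Matrix.det_fin_two _
    convert h using 1
    have e : ∀ i j, (M * Y) i j = M i 0 * Y 0 j + M i 1 * Y 1 j := by
      intro i j; rw [Matrix.mul_apply, Fin.sum_univ_two]
    rw [Matrix.trace_fin_two] at hY
    simp only [e]
    linear_combination (-(M 0 0 * M 1 1) + M 0 1 * M 1 0) * hY
  have hconst := is_const_of_deriv_eq_zero (fun s => (key s).differentiableAt)
    (fun s => (key s).deriv) t 0
  · simpa [NormedSpace.exp_zero] using hconst

lemma lieD_vanish (w : M2 → ℂ) (hw : ∀ x : M2, x.det = 1 → w x = 0) (Y : M2)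
    (hY : Y.trace = 0) (g : M2) (hg : g.det = 1) : lieD Y w g = 0 := by
  have : (fun t : ℝ => w (g * NormedSpace.exp (t • Y))) = fun _ => 0 :=
    funext fun t => hw _ (by rw [det_mul_exp g Y hY t, hg])
  unfold lieD
  rw [this, deriv_const]

lemma trV : Matrix.trace (!![0, 1/2; -(1/2), 0] : M2) = 0 := by
  rw [Matrix.trace_fin_two_of]; norm_num

lemma trU : Matrix.trace (!![0, 0; 1, 0] : M2) = 0 := by
  rw [Matrix.trace_fin_two_of]; norm_num

lemma matsplit : (!![0, 1/2; 1/2, 0] : M2) = !![0, 1/2; -(1/2), 0] + !![0, 0; 1, 0] := by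
  ext i j
  fin_cases i <;> fin_cases j <;> simp [Matrix.add_apply] <;> norm_num

lemma matsq : (!![0, 1/2; 1/2, 0] : M2) * !![0, 1/2; 1/2, 0]
    = !![0, 1/2; -(1/2), 0] * !![0, 1/2; -(1/2), 0]
      + !![0, 1/2; -(1/2), 0] * !![0, 0; 1, 0]
      + !![0, 1/2; -(1/2), 0] * !![0, 0; 1, 0]
      - !![1/2, 0; 0, -(1/2)] := by
  simp only [Matrix.mul_fin_two]
  ext i j
  fin_cases i <;> fin_cases j <;>
    simp [Matrix.add_apply, Matrix.sub_apply] <;> norm_num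

lemma matUsq : (!![0, 0; 1, 0] : M2) * !![0, 0; 1, 0] = 0 := by
  simp only [Matrix.mul_fin_two]
  ext i j
  fin_cases i <;> fin_cases j <;> simp

theorem casimir_aux_main (u : M2 → ℂ)
    (hu : ContDiff ℝ (⊤ : ℕ∞) u)
    (hU : ∀ g : M2, g.det = 1 → lieD !![0, 0; 1, 0] u g = 0) :
    ∀ g : M2, g.det = 1 →
      lieD !![1/2, 0; 0, -(1/2)] (lieD !![1/2, 0; 0, -(1/2)] u) g
          + lieD !![0, 1/2; 1/2, 0] (lieD !![0, 1/2; 1/2, 0] u) g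
          - lieD !![0, 1/2; -(1/2), 0] (lieD !![0, 1/2; -(1/2), 0] u) g
        = lieD !![1/2, 0; 0, -(1/2)] (lieD !![1/2, 0; 0, -(1/2)] u) g
          - lieD !![1/2, 0; 0, -(1/2)] u g := by
  intro g hg
  have hdiff : Differentiable ℝ u := hu.differentiable (by simp)
  have hd2 : fderiv ℝ (fderiv ℝ u) g (g * !![0, 1/2; -(1/2), 0]) (g * !![0, 0; 1, 0])
      = fderiv ℝ (fderiv ℝ u) g (g * !![0, 0; 1, 0]) (g * !![0, 1/2; -(1/2), 0]) :=
    second_derivative_symmetric (f := u) (f' := fderiv ℝ u)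
    (fun y => (hdiff y).hasFDerivAt)
    ((((hu.fderiv_right (le_of_eq ENat.coe_top_add_one)).differentiable
      (by simp)) g).hasFDerivAt)
    (g * !![0, 1/2; -(1/2), 0]) (g * !![0, 0; 1, 0])
  have hVU : lieD !![0, 1/2; -(1/2), 0] (lieD !![0, 0; 1, 0] u) g = 0 :=
    lieD_vanish _ hU _ trV g hg
  have hUU : lieD !![0, 0; 1, 0] (lieD !![0, 0; 1, 0] u) g = 0 :=
    lieD_vanish _ hU _ trU g hg
  rw [lieD_lieD u hu _ _ g] at hVU hUU
  rw [matUsq, mul_zero, map_zero, add_zero] at hUU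
  rw [lieD_lieD u hu _ _ g, lieD_lieD u hu !![0, 1/2; 1/2, 0] _ g,
    lieD_lieD u hu !![0, 1/2; -(1/2), 0] _ g,
    lieD_eq u hdiff !![1/2, 0; 0, -(1/2)] g]
  rw [show g * !![0, 1/2; 1/2, 0]
      = g * !![0, 1/2; -(1/2), 0] + g * !![0, 0; 1, 0] by rw [← mul_add, ← matsplit]]
  rw [show g * (!![0, 1/2; 1/2, 0] * !![0, 1/2; 1/2, 0])
      = g * (!![0, 1/2; -(1/2), 0] * !![0, 1/2; -(1/2), 0])
        + g * (!![0, 1/2; -(1/2), 0] * !![0, 0; 1, 0])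
        + g * (!![0, 1/2; -(1/2), 0] * !![0, 0; 1, 0])
        - g * !![1/2, 0; 0, -(1/2)] by rw [← mul_add, ← mul_add, ← mul_sub, ← matsq]]
  simp only [map_add, map_sub, ContinuousLinearMap.add_apply]
  linear_combination hVU + hVU + hUU - hd2

theorem casimir_on_ker_Uminus (u : M2 → ℂ)
    (hu : ContDiff ℝ (⊤ : ℕ∞) u)
    (hU : ∀ g : M2, g.det = 1 → lieD matUminus u g = 0) :
    ∀ g : M2, g.det = 1 →
      lieD matX (lieD matX u) g + lieD matXperp (lieD matXperp u) g
          - lieD matV (lieD matV u) g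
        = lieD matX (lieD matX u) g - lieD matX u g := by
  have hU' : ∀ g : M2, g.det = 1 → lieD !![0, 0; 1, 0] u g = 0 := by
    rw [show (!![0, 0; 1, 0] : M2) = matUminus from rfl]; exact hU
  have h := casimir_aux_main u hu hU'
  rw [show (!![1/2, 0; 0, -(1/2)] : M2) = matX from rfl,
    show (!![0, 1/2; 1/2, 0] : M2) = matXperp from rfl,
    show (!![0, 1/2; -(1/2), 0] : M2) = matV from rfl] at h
  exact h
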